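/- Consider the extended CFI block ω_k, containing vertices for all 2^k k-bit binary strings (colored c_e if even weight and c_o if odd weight), plus bit-pair vertices a_i, b_i as in χ_k, with the same edge rule. The color-preserving automorphisms of ω_k are exactly the maps determined by even-cardinality subsets S ⊆ [k] (swap a_i ↔ b_i for i ∈ S, and flip bits indexed by S on all string vertices), so ω_k has exactly 2^(k-1) automorphisms. -/

import Mathlib

/-- Hamming weight of a k-bit string. -/
def bitWeight {k : ℕ} (b : Fin k → Bool) : ℕ :=
  (Finset.univ.filter (fun i => b i = true)).card

/-- Vertices of the extended CFI block ω_k: one vertex for every k-bit string, plus the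
bit vertices a_i = (i, false) and b_i = (i, true). -/
def OmegaVert (k : ℕ) : Type :=
  (Fin k → Bool) ⊕ (Fin k × Bool)

/-- Adjacency of ω_k: x_b is adjacent to a_i iff bit i of b is 0, to b_i iff bit i is 1. -/
def omegaAdj {k : ℕ} : OmegaVert k → OmegaVert k → Prop
  | Sum.inl b, Sum.inr p => b p.1 = p.2
  | Sum.inr p, Sum.inl b => b p.1 = p.2
  | _, _ => False

/-- Colors of ω_k: string vertices are colored by their weight parity (c_e / c_o),
and the pair {a_i, b_i} has color i. -/
def omegaColor {k : ℕ} : OmegaVert k → Bool ⊕ Fin k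
  | Sum.inl b => Sum.inl (decide (Even (bitWeight b)))
  | Sum.inr p => Sum.inr p.1

/-- Flip the bits indexed by S. -/
def flipS {k : ℕ} (S : Finset (Fin k)) (b : Fin k → Bool) : Fin k → Bool :=
  fun i => if i ∈ S then !(b i) else b i

lemma flipS_flipS {k : ℕ} (S : Finset (Fin k)) (b : Fin k → Bool) :
    flipS S (flipS S b) = b := by
  funext i; simp only [flipS]; split <;> simp

lemma bitWeight_zmod {k : ℕ} (b : Fin k → Bool) :
    ((bitWeight b : ZMod 2)) = ∑ i : Fin k, (if b i = true then 1 else 0) := by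
  rw [bitWeight, Finset.card_filter]
  push_cast
  rfl

lemma even_iff_zmod (n : ℕ) : Even n ↔ (n : ZMod 2) = 0 := by
  rw [Nat.even_iff, ← Nat.dvd_iff_mod_eq_zero]
  exact (ZMod.natCast_eq_zero_iff n 2).symm

lemma even_bitWeight_flipS {k : ℕ} (S : Finset (Fin k)) (hS : Even S.card)
    (b : Fin k → Bool) : Even (bitWeight (flipS S b)) ↔ Even (bitWeight b) := by
  rw [even_iff_zmod, even_iff_zmod, bitWeight_zmod, bitWeight_zmod]
  have key : (∑ i : Fin k, (if flipS S b i = true then (1:ZMod 2) else 0)) =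
      (∑ i : Fin k, (if b i = true then (1:ZMod 2) else 0)) + (S.card : ZMod 2) := by
    have hcard : (S.card : ZMod 2) = ∑ i : Fin k, (if i ∈ S then (1:ZMod 2) else 0) := by
      rw [Finset.sum_ite_mem, Finset.univ_inter, Finset.sum_const, nsmul_eq_mul, mul_one]
    rw [hcard, ← Finset.sum_add_distrib]
    apply Finset.sum_congr rfl
    intro i _
    simp only [flipS]
    by_cases h : i ∈ S <;> rcases Bool.eq_false_or_eq_true (b i) with hb | hb <;>
      simp [h, hb] <;> decide
  rw [key]
  have h0 : (S.card : ZMod 2) = 0 := by rw [← even_iff_zmod]; exact hS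
  rw [h0, add_zero]

/-- The underlying function of the permutation determined by `S`. -/
def omegaMap {k : ℕ} (S : Finset (Fin k)) : OmegaVert k → OmegaVert k
  | Sum.inl b => Sum.inl (flipS S b)
  | Sum.inr p => Sum.inr (p.1, if p.1 ∈ S then !p.2 else p.2)

lemma omegaMap_involutive {k : ℕ} (S : Finset (Fin k)) :
    Function.Involutive (omegaMap S) := by
  intro x
  cases x with
  | inl b => simp [omegaMap, flipS_flipS]; rfl
  | inr p =>
      simp only [omegaMap]
      by_cases h : p.1 ∈ S <;> simp [h] <;> rfl

/-- The permutation determined by `S`. -/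
def omegaPerm {k : ℕ} (S : Finset (Fin k)) : Equiv.Perm (OmegaVert k) :=
  (omegaMap_involutive S).toPerm _

lemma omegaPerm_apply {k : ℕ} (S : Finset (Fin k)) (x : OmegaVert k) :
    omegaPerm S x = omegaMap S x := rfl

/-- Counting even-cardinality subsets. -/
lemma card_even_subsets (k : ℕ) :
    (Finset.univ.filter (fun S : Finset (Fin k) => Even S.card)).card = 2 ^ (k - 1) := by
  cases k with
  | zero => decide
  | succ n =>
      set E := Finset.univ.filter (fun S : Finset (Fin (n+1)) => Even S.card) with hE
      set O := Finset.univ.filter (fun S : Finset (Fin (n+1)) => ¬ Even S.card) with hO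
      have htot : E.card + O.card = 2 ^ (n + 1) := by
        rw [hE, hO, Finset.card_filter_add_card_filter_not]
        simp [Finset.card_univ]
      have hbij : E.card = O.card := by
        refine Finset.card_bij'
          (fun S _ => if (0 : Fin (n+1)) ∈ S then S.erase 0 else insert 0 S)
          (fun S _ => if (0 : Fin (n+1)) ∈ S then S.erase 0 else insert 0 S)
          ?hi ?hj ?li ?ri
        case hi =>
          intro S hS
          simp only [hE, hO, Finset.mem_filter, Finset.mem_univ, true_and] at hS ⊢
          by_cases h : (0 : Fin (n+1)) ∈ S
          · have hpos : 0 < S.card := Finset.card_pos.mpr ⟨0, h⟩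
            simp only [h, if_true, Finset.card_erase_of_mem h]
            rcases hS with ⟨m, hm⟩
            rintro ⟨m', hm'⟩
            omega
          · simp only [h, if_false, Finset.card_insert_of_notMem h]
            rcases hS with ⟨m, hm⟩
            rintro ⟨m', hm'⟩
            omega
        case hj =>
          intro S hS
          simp only [hE, hO, Finset.mem_filter, Finset.mem_univ, true_and] at hS ⊢
          rcases Nat.even_or_odd S.card with he | ho
          · exact absurd he hS
          by_cases h : (0 : Fin (n+1)) ∈ S
          · have hpos : 0 < S.card := Finset.card_pos.mpr ⟨0, h⟩
            simp only [h, if_true, Finset.card_erase_of_mem h]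
            rcases ho with ⟨m, hm⟩; exact ⟨m, by omega⟩
          · simp only [h, if_false, Finset.card_insert_of_notMem h]
            rcases ho with ⟨m, hm⟩; exact ⟨m + 1, by omega⟩
        case li =>
          intro S _
          by_cases h : (0 : Fin (n+1)) ∈ S
          · simp [h, Finset.insert_erase h]
          · simp [h, Finset.erase_insert h]
        case ri =>
          intro S _
          by_cases h : (0 : Fin (n+1)) ∈ S
          · simp [h, Finset.insert_erase h]
          · simp [h, Finset.erase_insert h]
      have h2 : 2 ^ (n + 1) = 2 * 2 ^ n := by ring
      simp only [Nat.add_sub_cancel]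
      omega

/-- The color-preserving automorphisms of ω_k are exactly the maps determined by
even-cardinality subsets S ⊆ [k] (swap a_i ↔ b_i for i ∈ S and flip the bits indexed
by S on all string vertices); hence ω_k has exactly 2^(k-1) automorphisms. -/
theorem omega_block_automorphisms (k : ℕ) :
    (∀ π : Equiv.Perm (OmegaVert k),
      ((∀ x y, omegaAdj (π x) (π y) ↔ omegaAdj x y) ∧
        ∀ x, omegaColor (π x) = omegaColor x) ↔
      ∃ S : Finset (Fin k), Even S.card ∧
        (∀ b : Fin k → Bool, π (Sum.inl b) = Sum.inl (flipS S b)) ∧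
        (∀ (i : Fin k) (t : Bool),
          π (Sum.inr (i, t)) = Sum.inr (i, if i ∈ S then !t else t))) ∧
    Nat.card {π : Equiv.Perm (OmegaVert k) //
        (∀ x y, omegaAdj (π x) (π y) ↔ omegaAdj x y) ∧
        ∀ x, omegaColor (π x) = omegaColor x} = 2 ^ (k - 1) := by
  have main : ∀ π : Equiv.Perm (OmegaVert k),
      ((∀ x y, omegaAdj (π x) (π y) ↔ omegaAdj x y) ∧
        ∀ x, omegaColor (π x) = omegaColor x) ↔
      ∃ S : Finset (Fin k), Even S.card ∧
        (∀ b : Fin k → Bool, π (Sum.inl b) = Sum.inl (flipS S b)) ∧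
        (∀ (i : Fin k) (t : Bool),
          π (Sum.inr (i, t)) = Sum.inr (i, if i ∈ S then !t else t)) := by
    intro π
    constructor
    · rintro ⟨hadj, hcol⟩
      classical
      -- π maps string vertices to string vertices
      have hstr : ∀ b : Fin k → Bool, ∃ b', π (Sum.inl b) = Sum.inl b' := by
        intro b
        have := hcol (Sum.inl b)
        cases h : π (Sum.inl b) with
        | inl b' => exact ⟨b', rfl⟩
        | inr p => rw [h] at this; simp [omegaColor] at this
      -- π maps pair vertices to pair vertices with the same index
      have hpair : ∀ (i : Fin k) (t : Bool), ∃ t',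
          π (Sum.inr (i, t)) = Sum.inr (i, t') := by
        intro i t
        have := hcol (Sum.inr (i, t))
        cases h : π (Sum.inr (i, t)) with
        | inl b' => rw [h] at this; simp [omegaColor] at this
        | inr p =>
            obtain ⟨j, s⟩ := p
            rw [h] at this
            simp only [omegaColor, Sum.inr.injEq] at this
            subst this
            exact ⟨s, rfl⟩
      set S := Finset.univ.filter
        (fun i : Fin k => π (Sum.inr (i, false)) = Sum.inr (i, true)) with hSdef
      have hP : ∀ (i : Fin k) (t : Bool),
          π (Sum.inr (i, t)) = Sum.inr (i, if i ∈ S then !t else t) := by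
        intro i t
        obtain ⟨tf, hf⟩ := hpair i false
        obtain ⟨tt, ht⟩ := hpair i true
        have hne : tf ≠ tt := by
          intro h
          have : π (Sum.inr (i, false)) = π (Sum.inr (i, true)) := by
            rw [hf, ht, h]
          have h2 := congrArg Prod.snd (Sum.inr.inj (π.injective this))
          simp at h2
        have hmem : i ∈ S ↔ tf = true := by
          rw [hSdef, Finset.mem_filter]
          constructor
          · rintro ⟨-, h⟩
            rw [hf] at h
            exact congrArg Prod.snd (Sum.inr.inj h)
          · intro h; exact ⟨Finset.mem_univ i, by rw [hf, h]⟩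
        cases t with
        | false =>
            rw [hf]
            by_cases h : i ∈ S
            · simp [h, hmem.mp h]; rfl
            · simp only [h, if_false]
              cases htf : tf
              · rfl
              · exact absurd (hmem.mpr htf) h
        | true =>
            rw [ht]
            by_cases h : i ∈ S
            · have : tf = true := hmem.mp h
              simp only [h, if_true, Bool.not_true]
              cases htt : tt
              · rfl
              · exact absurd (this.trans htt.symm) hne
            · have htf : tf = false := by
                cases htf : tf
                · rfl
                · exact absurd (hmem.mpr htf) h
              simp only [h, if_false]
              cases htt : tt
              · exact absurd (htf.trans htt.symm) hne
              · rfl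
      have hB : ∀ b : Fin k → Bool, π (Sum.inl b) = Sum.inl (flipS S b) := by
        intro b
        obtain ⟨b', hb'⟩ := hstr b
        rw [hb']
        congr 1
        funext i
        have := (hadj (Sum.inl b) (Sum.inr (i, b i))).mpr (by simp [omegaAdj])
        rw [hb', hP i (b i)] at this
        simp only [omegaAdj] at this
        simp only [flipS]
        exact this
      refine ⟨S, ?_, hB, hP⟩
      -- parity of S from color preservation on the all-zero string
      have := hcol (Sum.inl (fun _ => false))
      rw [hB (fun _ => false)] at this
      simp only [omegaColor, Sum.inl.injEq, decide_eq_decide] at this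
      have hw0 : bitWeight (fun _ : Fin k => false) = 0 := by
        simp [bitWeight]
      have hwS : bitWeight (flipS S (fun _ : Fin k => false)) = S.card := by
        unfold bitWeight
        congr 1
        ext i
        simp only [Finset.mem_filter, Finset.mem_univ, true_and, flipS, Bool.not_false]
        by_cases h : i ∈ S
        · rw [if_pos h]; exact iff_of_true rfl h
        · rw [if_neg h]; exact iff_of_false (by simp) h
      rw [hw0, hwS] at this
      exact this.mpr (Even.zero)
    · rintro ⟨S, hS, hB, hP⟩
      constructor
      · intro x y
        cases x with
        | inl b =>
            cases y with
            | inl b' => rw [hB b, hB b']; exact Iff.rfl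
            | inr p =>
                obtain ⟨i, t⟩ := p
                rw [hB b, hP i t]
                simp only [omegaAdj, flipS]
                by_cases h : i ∈ S <;> simp [h]
        | inr p =>
            obtain ⟨i, t⟩ := p
            cases y with
            | inl b =>
                rw [hB b, hP i t]
                simp only [omegaAdj, flipS]
                by_cases h : i ∈ S <;> simp [h]
            | inr q =>
                obtain ⟨j, s⟩ := q
                rw [hP i t, hP j s]
                exact Iff.rfl
      · intro x
        cases x with
        | inl b =>
            rw [hB b]
            simp only [omegaColor, Sum.inl.injEq, decide_eq_decide]
            exact even_bitWeight_flipS S hS b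
        | inr p =>
            obtain ⟨i, t⟩ := p
            rw [hP i t]
            simp [omegaColor]
  refine ⟨main, ?_⟩
  -- counting
  have e : {S : Finset (Fin k) // Even S.card} ≃
      {π : Equiv.Perm (OmegaVert k) //
        (∀ x y, omegaAdj (π x) (π y) ↔ omegaAdj x y) ∧
        ∀ x, omegaColor (π x) = omegaColor x} := by
    refine Equiv.ofBijective
      (fun S => ⟨omegaPerm S.1, (main _).mpr ⟨S.1, S.2,
        fun b => rfl, fun i t => rfl⟩⟩) ⟨?_, ?_⟩
    · rintro ⟨S, hS⟩ ⟨S', hS'⟩ h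
      simp only [Subtype.mk.injEq] at h
      apply Subtype.ext
      ext i
      have := congrArg (fun π : Equiv.Perm (OmegaVert k) => π (Sum.inr (i, false))) h
      change omegaMap S (Sum.inr (i, false)) = omegaMap S' (Sum.inr (i, false)) at this
      simp only [omegaPerm_apply, omegaMap, Prod.mk.injEq, Sum.inr.injEq] at this
      by_cases h1 : i ∈ S <;> by_cases h2 : i ∈ S' <;>
          simp only [h1, h2, if_true, if_false, Bool.not_false] at this
      · simp [h1, h2]
      · have h4 := congrArg Prod.snd (Sum.inr.inj this)
        simp at h4
      · have h4 := congrArg Prod.snd (Sum.inr.inj this)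
        simp at h4
      · simp [h1, h2]
    · rintro ⟨π, hπ⟩
      obtain ⟨S, hS, hB, hP⟩ := (main π).mp hπ
      refine ⟨⟨S, hS⟩, ?_⟩
      apply Subtype.ext
      simp only
      apply Equiv.ext
      intro x
      cases x with
      | inl b => exact (hB b).symm
      | inr p => obtain ⟨i, t⟩ := p; exact (hP i t).symm
  rw [← Nat.card_congr e, Nat.card_eq_fintype_card, Fintype.card_subtype]
  exact card_even_subsets k
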